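/- Among the ~n²/(4A) dominance vectors of the blocks of one fixed row-column parity class in G_i, after removing at most √(kq) + α^i/2 + n²/(2Aα^i) of them (those in the first meta-row and those whose immediate upper-left block is empty of x's points), the remaining vectors are linearly independent over ℝ: sorting the blocks in upper-to-lower, left-to-right order, each remaining block's dominance vector has a nonzero coordinate (corresponding to a point of x in its immediate upper-left block) at which all earlier vectors vanish. -/

import Mathlib

open Classical Finset in
/-- Among the dominance vectors of the blocks of the odd-row/odd-column parity
class of the meta-grid `G_i` (with `R = n²/(Aα^i)` meta-rows and `C = α^i`
meta-columns), after removing at most `√(kq) + α^i/2 + n²/(2Aα^i)` of them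
(those in the first meta-row, the first meta-column, and those whose immediate
upper-left block contains no point of `x`), the remaining vectors are linearly
independent over `ℝ`.  Here `β j` is the block of `G_i` containing the `j`-th
point of `x`, and the dominance vector of a class block `(u,v)` is the 0-1
vector, supported on the coordinates of points lying in opposite-parity blocks,
indicating which points are dominated. -/
theorem stmt10 (n A α i k q : ℕ) (hA : 0 < A) (hα : 0 < α)
    (hdvd : A * α ^ i ∣ n ^ 2)
    (P : Fin k → Fin n × Fin n)
    (β : Fin k → ℕ × ℕ)
    (hβ : ∀ j, β j = (((P j).1 : ℕ) * n / (A * α ^ i), ((P j).2 : ℕ) * α ^ i / n))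
    (R C : ℕ) (hR : R = n ^ 2 / (A * α ^ i)) (hC : C = α ^ i)
    (hrange : ∀ j, (β j).1 < R ∧ (β j).2 < C)
    -- x is evenly-spreading: at most √(kq) blocks of G_i contain no point of x
    (hES : (((Finset.range R ×ˢ Finset.range C).filter
        (fun b => ∀ j, β j ≠ b)).card : ℝ) ≤ Real.sqrt ((k : ℝ) * q)) :
    ∃ Bad : Finset (ℕ × ℕ),
      Bad ⊆ (Finset.range R ×ˢ Finset.range C).filter
          (fun b => b.1 % 2 = 1 ∧ b.2 % 2 = 1)
      ∧ (Bad.card : ℝ) ≤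
          Real.sqrt ((k : ℝ) * q) + (α : ℝ) ^ i / 2 + (n : ℝ) ^ 2 / (2 * A * (α : ℝ) ^ i)
      ∧ LinearIndependent ℝ
          (fun b : {b : ℕ × ℕ // b ∈ ((Finset.range R ×ˢ Finset.range C).filter
              (fun b => b.1 % 2 = 1 ∧ b.2 % 2 = 1)) \ Bad} =>
            (fun j : Fin k =>
              if (β j).1 % 2 = 0 ∧ (β j).2 % 2 = 0 ∧
                  (β j).1 < (b : ℕ × ℕ).1 ∧ (β j).2 < (b : ℕ × ℕ).2
              then (1 : ℝ) else 0)) := by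
  set S : Finset (ℕ × ℕ) := (Finset.range R ×ˢ Finset.range C).filter
      (fun b => b.1 % 2 = 1 ∧ b.2 % 2 = 1) with hSdef
  set Bad : Finset (ℕ × ℕ) := S.filter (fun b => ∀ j, β j ≠ (b.1 - 1, b.2 - 1)) with hBaddef
  have hSmem : ∀ b ∈ S, b.1 < R ∧ b.2 < C ∧ b.1 % 2 = 1 ∧ b.2 % 2 = 1 := by
    intro b hb
    simp only [hSdef, Finset.mem_filter, Finset.mem_product, Finset.mem_range] at hb
    exact ⟨hb.1.1, hb.1.2, hb.2.1, hb.2.2⟩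
  refine ⟨Bad, Finset.filter_subset _ _, ?_, ?_⟩
  · -- cardinality bound
    have hcard : Bad.card ≤ ((Finset.range R ×ˢ Finset.range C).filter
        (fun b => ∀ j, β j ≠ b)).card := by
      apply Finset.card_le_card_of_injOn (fun b => (b.1 - 1, b.2 - 1))
      · intro b hb
        simp only [Finset.mem_coe, hBaddef, Finset.mem_filter] at hb
        obtain ⟨hbS, hemp⟩ := hb
        obtain ⟨h1, h2, _, _⟩ := hSmem b hbS
        simp only [Finset.mem_coe, Finset.mem_filter, Finset.mem_product, Finset.mem_range]
        exact ⟨⟨lt_of_le_of_lt (Nat.sub_le _ _) h1, lt_of_le_of_lt (Nat.sub_le _ _) h2⟩, hemp⟩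
      · intro a ha b hb hab
        simp only [Finset.mem_coe, hBaddef, Finset.mem_filter] at ha hb
        obtain ⟨_, _, ho1, ho2⟩ := hSmem a ha.1
        obtain ⟨_, _, ho1', ho2'⟩ := hSmem b hb.1
        have h1 := congrArg Prod.fst hab
        have h2 := congrArg Prod.snd hab
        simp only at h1 h2
        have : a.1 = b.1 := by omega
        have : a.2 = b.2 := by omega
        exact Prod.ext ‹a.1 = b.1› ‹a.2 = b.2›
    have h1 : (0:ℝ) ≤ (α : ℝ) ^ i / 2 := by positivity
    have h2 : (0:ℝ) ≤ (n : ℝ) ^ 2 / (2 * A * (α : ℝ) ^ i) := by positivity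
    have := hES
    have hc : (Bad.card : ℝ) ≤ (((Finset.range R ×ˢ Finset.range C).filter
        (fun b => ∀ j, β j ≠ b)).card : ℝ) := by exact_mod_cast hcard
    linarith
  · -- linear independence
    set T : Finset (ℕ × ℕ) := S \ Bad with hTdef
    have hkey : ∀ b : {b : ℕ × ℕ // b ∈ T}, ∃ j : Fin k,
        β j = ((b : ℕ × ℕ).1 - 1, (b : ℕ × ℕ).2 - 1) := by
      intro b
      obtain ⟨hbS, hbBad⟩ := Finset.mem_sdiff.mp b.2
      rw [hBaddef, Finset.mem_filter] at hbBad
      push_neg at hbBad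
      exact hbBad hbS
    rw [Fintype.linearIndependent_iff]
    intro g hg
    -- key claim by downward induction
    have main : ∀ N : ℕ, ∀ b : {b : ℕ × ℕ // b ∈ T},
        R + C ≤ (b : ℕ × ℕ).1 + (b : ℕ × ℕ).2 + N → g b = 0 := by
      intro N
      induction N with
      | zero =>
        intro b hb
        have hbS : (b : ℕ × ℕ) ∈ S := (Finset.mem_sdiff.mp b.2).1
        obtain ⟨h1, h2, _, _⟩ := hSmem _ hbS
        omega
      | succ N ih =>
        intro b hb
        obtain ⟨j, hj⟩ := hkey b
        have hbS : (b : ℕ × ℕ) ∈ S := (Finset.mem_sdiff.mp b.2).1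
        obtain ⟨hbR, hbC, hb1, hb2⟩ := hSmem _ hbS
        have hb1pos : 1 ≤ (b : ℕ × ℕ).1 := by omega
        have hb2pos : 1 ≤ (b : ℕ × ℕ).2 := by omega
        have hgj := congrFun hg j
        rw [Finset.sum_apply] at hgj
        simp only [Pi.smul_apply, smul_eq_mul, Pi.zero_apply] at hgj
        have hterm : ∀ b' : {b : ℕ × ℕ // b ∈ T}, b' ∈ Finset.univ → b' ≠ b →
            g b' * (if (β j).1 % 2 = 0 ∧ (β j).2 % 2 = 0 ∧
                (β j).1 < (b' : ℕ × ℕ).1 ∧ (β j).2 < (b' : ℕ × ℕ).2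
              then (1 : ℝ) else 0) = 0 := by
          intro b' _ hne
          by_cases hc : (β j).1 % 2 = 0 ∧ (β j).2 % 2 = 0 ∧
              (β j).1 < (b' : ℕ × ℕ).1 ∧ (β j).2 < (b' : ℕ × ℕ).2
          · rw [if_pos hc, mul_one]
            have hβ1 : (β j).1 = (b : ℕ × ℕ).1 - 1 := by rw [hj]
            have hβ2 : (β j).2 = (b : ℕ × ℕ).2 - 1 := by rw [hj]
            have hle1 : (b : ℕ × ℕ).1 ≤ (b' : ℕ × ℕ).1 := by omega
            have hle2 : (b : ℕ × ℕ).2 ≤ (b' : ℕ × ℕ).2 := by omega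
            have hnev : (b' : ℕ × ℕ) ≠ (b : ℕ × ℕ) := by
              intro h; exact hne (Subtype.ext h)
            have hstrict : (b : ℕ × ℕ).1 + (b : ℕ × ℕ).2 < (b' : ℕ × ℕ).1 + (b' : ℕ × ℕ).2 := by
              rcases Nat.lt_or_ge (b : ℕ × ℕ).1 (b' : ℕ × ℕ).1 with h | h
              · omega
              · have he1 : (b : ℕ × ℕ).1 = (b' : ℕ × ℕ).1 := le_antisymm hle1 h
                have : (b : ℕ × ℕ).2 ≠ (b' : ℕ × ℕ).2 := by
                  intro he2
                  exact hnev (Prod.ext he1.symm he2.symm)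
                omega
            exact ih b' (by omega)
          · rw [if_neg hc, mul_zero]
        have hsum := Finset.sum_eq_single b hterm (fun h => absurd (Finset.mem_univ b) h)
        rw [hsum] at hgj
        have hcond : (β j).1 % 2 = 0 ∧ (β j).2 % 2 = 0 ∧
            (β j).1 < (b : ℕ × ℕ).1 ∧ (β j).2 < (b : ℕ × ℕ).2 := by
          have hβ1 : (β j).1 = (b : ℕ × ℕ).1 - 1 := by rw [hj]
          have hβ2 : (β j).2 = (b : ℕ × ℕ).2 - 1 := by rw [hj]
          refine ⟨by omega, by omega, by omega, by omega⟩
        rw [if_pos hcond, mul_one] at hgj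
        exact hgj
    intro b
    exact main (R + C) b (by omega)
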